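/- arXiv:1104.5004 — 5 statements merged into one kernel-verified Lean document; each statement's English description precedes it below -/
import Mathlib

section
/- Let p be an odd prime and let H be the vertical stacking of j distinct layers L_{a_1}, ..., L_{a_j} (with a_1, ..., a_j distinct nonzero elements of Z_p, 1 ≤ j ≤ p-1). Then the F_2-rank of H equals j(p-1) + 1. -/
open Matrix

lemma const_of_period (p : ℕ) [hp : Fact p.Prime] {β : Type*} (g : ZMod p → β)
    (d : ZMod p) (hd : d ≠ 0) (h : ∀ z, g z = g (z + d)) : ∀ y y', g y = g y' := by
  have hiter : ∀ (n : ℕ) (z : ZMod p), g z = g (z + n * d) := by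
    intro n
    induction n with
    | zero => simp
    | succ k ih =>
      intro z
      have := h (z + k * d)
      rw [← ih z] at this
      rw [this]
      congr 1
      push_cast
      ring
  intro y y'
  have key : g y = g (y + ((y' - y) * d⁻¹).val * d) := hiter _ y
  rw [key]
  congr 1
  have hv : (((y' - y) * d⁻¹).val : ZMod p) = (y' - y) * d⁻¹ := by
    rw [ZMod.natCast_val, ZMod.cast_id]
  rw [hv, mul_assoc, inv_mul_cancel₀ hd, mul_one]
  ring

lemma const_of_eqs (p : ℕ) [hp : Fact p.Prime] (hodd : p ≠ 2) :
    ∀ (A : Finset (ZMod p)) (f : ZMod p → ZMod p → ZMod 2),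
      (∀ t s : ZMod p, ∑ a ∈ A, f a (s - t * a) = 0) →
      ∀ a ∈ A, ∀ y y', f a y = f a y' := by
  intro A
  induction A using Finset.induction_on with
  | empty => intro f _ a ha; exact absurd ha (Finset.notMem_empty a)
  | @insert a0 A' ha0 ih =>
    intro f hf
    set g : ZMod p → ZMod p → ZMod 2 := fun a y => f a (y - a) - f a (y - a0) with hg
    have hfins : ∀ t s : ZMod p,
        f a0 (s - t * a0) + ∑ a ∈ A', f a (s - t * a) = 0 := by
      intro t s
      have := hf t s
      rwa [Finset.sum_insert ha0] at this
    have key : ∀ t s : ZMod p, ∑ a ∈ A', g a (s - t * a) = 0 := by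
      intro t s
      have h1 := hfins (t + 1) s
      have h2 := hfins t (s - a0)
      have e0 : s - a0 - t * a0 = s - (t + 1) * a0 := by ring
      rw [e0] at h2
      have : ∑ a ∈ A', g a (s - t * a) =
          (∑ a ∈ A', f a (s - (t + 1) * a)) - (∑ a ∈ A', f a (s - a0 - t * a)) := by
        rw [← Finset.sum_sub_distrib]
        refine Finset.sum_congr rfl ?_
        intro a _
        have e1 : s - t * a - a = s - (t + 1) * a := by ring
        have e2 : s - t * a - a0 = s - a0 - t * a := by ring
        simp only [hg, e1, e2]
      rw [this]
      have hA1 : ∑ a ∈ A', f a (s - (t + 1) * a) = -f a0 (s - (t + 1) * a0) := by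
        linear_combination h1
      have hA2 : ∑ a ∈ A', f a (s - a0 - t * a) = -f a0 (s - (t + 1) * a0) := by
        linear_combination h2
      rw [hA1, hA2, sub_self]
    have hgconst := ih g key
    have hfconst : ∀ a ∈ A', ∀ y y', f a y = f a y' := by
      intro a ha
      have hsum : ∑ y : ZMod p, g a y = 0 := by
        simp only [hg]
        rw [Finset.sum_sub_distrib]
        have r1 : ∑ y : ZMod p, f a (y - a) = ∑ y : ZMod p, f a y :=
          Fintype.sum_equiv (Equiv.subRight a) _ _ (fun y => rfl)
        have r2 : ∑ y : ZMod p, f a (y - a0) = ∑ y : ZMod p, f a y :=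
          Fintype.sum_equiv (Equiv.subRight a0) _ _ (fun y => rfl)
        rw [r1, r2, sub_self]
      have hconstg : ∀ y, g a y = g a 0 := fun y => hgconst a ha y 0
      have hsum' : (p : ZMod 2) * g a 0 = 0 := by
        calc (p : ZMod 2) * g a 0 = ∑ _y : ZMod p, g a 0 := by
              rw [Finset.sum_const, Finset.card_univ, ZMod.card, nsmul_eq_mul]
          _ = ∑ y : ZMod p, g a y := Finset.sum_congr rfl fun y _ => (hconstg y).symm
          _ = 0 := hsum
      have hpodd : (p : ZMod 2) = 1 := by
        rcases (Fact.out : p.Prime).eq_two_or_odd with h | h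
        · exact absurd h hodd
        · rw [← ZMod.natCast_mod p 2, h, Nat.cast_one]
      rw [hpodd, one_mul] at hsum'
      have hgzero : ∀ y, g a y = 0 := fun y => (hconstg y).trans hsum'
      have hper : ∀ z, f a z = f a (z + (a - a0)) := by
        intro z
        have := hgzero (z + a)
        simp only [hg, sub_eq_zero] at this
        have e1 : z + a - a = z := by ring
        have e2 : z + a - a0 = z + (a - a0) := by ring
        rw [e1, e2] at this
        exact this
      have hdne : a - a0 ≠ 0 := sub_ne_zero.mpr (by rintro rfl; exact ha0 ha)
      exact const_of_period p (f a) (a - a0) hdne hper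
    intro a ha y y'
    rcases Finset.mem_insert.mp ha with rfl | ha'
    · have h0 : ∀ s, f a s = -∑ b ∈ A', f b s := by
        intro s
        have := hfins 0 s
        simp only [zero_mul, sub_zero] at this
        linear_combination this
      rw [h0 y, h0 y']
      congr 1
      exact Finset.sum_congr rfl fun b hb => hfconst b hb y y'
    · exact hfconst a ha' y y'

/-- `I(x)`: the `p × p` circulant permutation matrix over `F₂` with a one in
row `y` and column `x + y`. -/
def cpm (p : ℕ) (x : ZMod p) : Matrix (ZMod p) (ZMod p) (ZMod 2) :=
  fun y z => if z = x + y then 1 else 0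

/-- The layer `L_a`: the `p × p²` binary matrix horizontally concatenating
`I(0), I(a), …, I((p-1)a)`. -/
def layer (p : ℕ) (a : ZMod p) : Matrix (ZMod p) (ZMod p × ZMod p) (ZMod 2) :=
  fun y c => cpm p (c.1 * a) y c.2

/-- Vertical stacking of the layers `L_a` for `a` ranging over a finite set `A`. -/
def stack (p : ℕ) (A : Finset (ZMod p)) :
    Matrix ({a // a ∈ A} × ZMod p) (ZMod p × ZMod p) (ZMod 2) :=
  fun r c => layer p r.1.1 r.2 c

/-- The `F₂`-rank of the stacking of `j` distinct layers `L_a`, `a` ranging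
over a nonempty set `A` of nonzero residues (`1 ≤ j = |A| ≤ p-1`), equals
`j(p-1) + 1`. -/
theorem stmt_6 (p : ℕ) [Fact p.Prime] (hodd : p ≠ 2)
    (A : Finset (ZMod p)) (hA : A.Nonempty) (hA0 : (0 : ZMod p) ∉ A) :
    (stack p A).rank = A.card * (p - 1) + 1 := by
  classical
  have hp : p.Prime := Fact.out
  haveI : NeZero p := ⟨hp.ne_zero⟩
  set ι := {a // a ∈ A} with hι
  -- the sum functional
  let σ : (ι → ZMod 2) →ₗ[ZMod 2] ZMod 2 :=
    { toFun := fun ε => ∑ i, ε i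
      map_add' := fun x y => by simp [Finset.sum_add_distrib]
      map_smul' := fun c x => by simp [Finset.mul_sum] }
  -- repeating a vector along the second coordinate
  let Φ : (ι → ZMod 2) →ₗ[ZMod 2] (ι × ZMod p → ZMod 2) :=
    { toFun := fun ε r => ε r.1
      map_add' := fun x y => rfl
      map_smul' := fun c x => rfl }
  have hΦinj : Function.Injective Φ := by
    intro x y hxy
    funext a
    exact congrFun hxy (a, 0)
  have hcol : ∀ (v : ι × ZMod p → ZMod 2) (t s : ZMod p),
      ((stack p A)ᵀ *ᵥ v) (t, s) = ∑ a : ι, v (a, s - t * a.1) := by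
    intro v t s
    simp only [Matrix.mulVec, dotProduct, Matrix.transpose_apply, stack, layer, cpm]
    rw [Fintype.sum_prod_type]
    refine Finset.sum_congr rfl ?_
    intro a _
    have hterm : ∀ y : ZMod p,
        (if s = t * (a : ZMod p) + y then (1 : ZMod 2) else 0) * v (a, y) =
        if y = s - t * (a : ZMod p) then v (a, y) else 0 := by
      intro y
      by_cases hy : y = s - t * (a : ZMod p)
      · rw [if_pos hy, if_pos (by rw [hy]; ring), one_mul]
      · rw [if_neg hy, if_neg (fun h => hy (by rw [h]; ring)), zero_mul]
    rw [Finset.sum_congr rfl fun y _ => hterm y, Finset.sum_ite_eq' Finset.univ]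
    simp
  -- kernel characterization
  have hkereq : LinearMap.ker ((stack p A)ᵀ.mulVecLin) =
      Submodule.map Φ (LinearMap.ker σ) := by
    ext v
    simp only [LinearMap.mem_ker, Submodule.mem_map, Matrix.mulVecLin_apply]
    constructor
    · intro hv
      have heq : ∀ t s : ZMod p, ∑ a : ι, v (a, s - t * a.1) = 0 := by
        intro t s
        have := congrFun hv (t, s)
        rwa [hcol] at this
      set f : ZMod p → ZMod p → ZMod 2 :=
        fun a y => if h : a ∈ A then v (⟨a, h⟩, y) else 0 with hf
      have heqf : ∀ t s : ZMod p, ∑ a ∈ A, f a (s - t * a) = 0 := by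
        intro t s
        rw [← Finset.sum_attach A (fun a => f a (s - t * a))]
        have := heq t s
        rw [Finset.univ_eq_attach] at this
        rw [← this]
        refine Finset.sum_congr rfl ?_
        intro a _
        simp only [hf, dif_pos a.2]
      have hconst := const_of_eqs p hodd A f heqf
      refine ⟨fun a => v (a, 0), ?_, ?_⟩
      · show ∑ a : ι, v (a, 0) = 0
        have := heq 0 0
        simpa using this
      · funext r
        show v (r.1, 0) = v r
        have hc := hconst r.1.1 r.1.2 0 r.2
        simpa only [hf, dif_pos r.1.2, Subtype.coe_eta] using hc
    · rintro ⟨ε, hε, rfl⟩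
      funext c
      obtain ⟨t, s⟩ := c
      rw [hcol]
      exact hε
  -- dimension of ker σ
  have hcardι : Fintype.card ι = A.card := Fintype.card_coe A
  have hd1 : Module.finrank (ZMod 2) (LinearMap.ker σ) = A.card - 1 := by
    obtain ⟨a0, ha0⟩ := hA
    have hsurj : Function.Surjective σ := by
      intro c
      refine ⟨Pi.single ⟨a0, ha0⟩ c, ?_⟩
      show ∑ i : ι, Pi.single (⟨a0, ha0⟩ : ι) c i = c
      rw [Finset.sum_pi_single']
      simp
    have hfr := LinearMap.finrank_range_add_finrank_ker σ
    rw [LinearMap.range_eq_top.mpr hsurj, finrank_top,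
      Module.finrank_self, Module.finrank_pi, hcardι] at hfr
    omega
  have hd2 : Module.finrank (ZMod 2)
      (LinearMap.ker ((stack p A)ᵀ.mulVecLin)) = A.card - 1 := by
    rw [hkereq, ← (Submodule.equivMapOfInjective Φ hΦinj (LinearMap.ker σ)).finrank_eq]
    exact hd1
  have hfr := LinearMap.finrank_range_add_finrank_ker ((stack p A)ᵀ.mulVecLin)
  rw [hd2, Module.finrank_pi, Fintype.card_prod, hcardι, ZMod.card] at hfr
  have hrev : (stack p A).rank = (stack p A)ᵀ.rank := ((stack p A).rank_transpose).symm
  rw [hrev]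
  have hrankdef : (stack p A)ᵀ.rank =
      Module.finrank (ZMod 2) (LinearMap.range ((stack p A)ᵀ.mulVecLin)) := rfl
  have hc1 : 1 ≤ A.card := hA.card_pos
  have hp2 : 2 ≤ p := hp.two_le
  have hmul : A.card * p = A.card * (p - 1) + A.card := by
    have h1 : p - 1 + 1 = p := by omega
    calc A.card * p = A.card * ((p - 1) + 1) := by rw [h1]
      _ = A.card * (p - 1) + A.card := by ring
  rw [hrankdef]
  omega
end

section
/- Let p be an odd prime and 1 ≤ j ≤ p-1. A stacking H of j distinct layers L_{a_1}, ..., L_{a_j} contains no 4-cycle: no 2 × 2 all-ones submatrix exists in H. Equivalently, any two distinct rows of H share a one in at most one coordinate position. -/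
lemma stack_eq_one {p : ℕ} {A : Finset (ZMod p)} {r : {a // a ∈ A} × ZMod p}
    {c : ZMod p × ZMod p} (h : stack p A r c = 1) :
    c.2 = c.1 * r.1.1 + r.2 := by
  by_contra hne
  simp [stack, layer, cpm, hne] at h

/-- A stacking of distinct layers indexed by nonzero residues contains no
4-cycle: any two distinct rows share a one in at most one coordinate
position. -/
theorem stmt_7 (p : ℕ) [Fact p.Prime] (hodd : p ≠ 2)
    (A : Finset (ZMod p)) (hA : A.Nonempty) (hA0 : (0 : ZMod p) ∉ A)
    (r₁ r₂ : {a // a ∈ A} × ZMod p) (hr : r₁ ≠ r₂)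
    (c c' : ZMod p × ZMod p)
    (h1 : stack p A r₁ c = 1) (h2 : stack p A r₂ c = 1)
    (h3 : stack p A r₁ c' = 1) (h4 : stack p A r₂ c' = 1) :
    c = c' := by
  have e1 := stack_eq_one h1
  have e2 := stack_eq_one h2
  have e3 := stack_eq_one h3
  have e4 := stack_eq_one h4
  by_cases ha : (r₁.1 : ZMod p) = r₂.1
  · -- same layer: then the residues differ, contradiction with e1, e2
    have hy : r₁.2 ≠ r₂.2 := by
      intro hy
      exact hr (Prod.ext (Subtype.ext ha) hy)
    rw [ha] at e1
    exact absurd (by linear_combination e2 - e1) hy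
  · -- different layers
    have hc1 : c.1 = c'.1 := by
      have hne : (r₁.1 : ZMod p) - r₂.1 ≠ 0 := sub_ne_zero.mpr ha
      have : (c.1 - c'.1) * ((r₁.1 : ZMod p) - r₂.1) = 0 := by
        linear_combination e2 - e1 + e3 - e4
      rcases mul_eq_zero.mp this with h | h
      · exact sub_eq_zero.mp h
      · exact absurd h hne
    have hc2 : c.2 = c'.2 := by rw [e1, e3, hc1]
    exact Prod.ext hc1 hc2
end

section
/- Let p be an odd prime and A a set of j distinct nonzero residues mod p. The binary code with parity-check matrix H given by stacking the layers L_a, a ∈ A, is a linear code of length p^2 and dimension p^2 - j(p-1) - 1. -/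
open Matrix

section Aux

variable (p : ℕ) [Fact p.Prime] (A : Finset (ZMod p))

/-- The transpose of the stack applied to a vector, pointwise. -/
lemma stack_transpose_apply (w : {a // a ∈ A} × ZMod p → ZMod 2) (x z : ZMod p) :
    (stack p A)ᵀ.mulVecLin w (x, z) = ∑ a : {a // a ∈ A}, w (a, z - x * a.1) := by
  simp only [Matrix.mulVecLin_apply, Matrix.mulVec, Matrix.transpose_apply, stack, layer, cpm,
    dotProduct, Fintype.sum_prod_type]
  refine Finset.sum_congr rfl fun a _ => ?_
  rw [Finset.sum_eq_single (z - x * a.1)]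
  · simp
  · intro y _ hy
    rw [if_neg, zero_mul]
    intro h
    exact hy (by rw [h]; ring)
  · simp

lemma mem_ker_transpose_iff (hodd : p ≠ 2) (w : {a // a ∈ A} × ZMod p → ZMod 2) :
    w ∈ LinearMap.ker (stack p A)ᵀ.mulVecLin ↔
      (∀ a y, w (a, y) = w (a, 0)) ∧ ∑ a : {a // a ∈ A}, w (a, 0) = 0 := by
  have hp : p.Prime := Fact.out
  have hcard : ((p : ℕ) : ZMod 2) = 1 := by
    have h1 : p % 2 = 1 := Nat.odd_iff.mp (hp.odd_of_ne_two hodd)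
    rw [← ZMod.natCast_mod, h1, Nat.cast_one]
  constructor
  · intro hw
    have key : ∀ (x z : ZMod p), ∑ a : {a // a ∈ A}, w (a, z - x * a.1) = 0 := by
      intro x z
      have := congrFun (LinearMap.mem_ker.mp hw) (x, z)
      rwa [stack_transpose_apply] at this
    -- main computation: for each b ∈ A and y₀, w (b, y₀) is independent of y₀
    have main : ∀ (b : {a // a ∈ A}) (y₀ : ZMod p),
        w (b, y₀) = ∑ a ∈ Finset.univ.erase b, ∑ y : ZMod p, w (a, y) := by
      intro b y₀
      have h0 : ∑ x : ZMod p, ∑ a : {a // a ∈ A}, w (a, (y₀ + x * b.1) - x * a.1) = 0 :=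
        Finset.sum_eq_zero fun x _ => key x (y₀ + x * b.1)
      rw [Finset.sum_comm] at h0
      have hsplit : ∀ a : {a // a ∈ A},
          ∑ x : ZMod p, w (a, (y₀ + x * b.1) - x * a.1)
            = ∑ x : ZMod p, w (a, y₀ + x * (b.1 - a.1)) := by
        intro a
        refine Finset.sum_congr rfl fun x _ => ?_
        ring_nf
      simp_rw [hsplit] at h0
      rw [← Finset.add_sum_erase _ _ (Finset.mem_univ b)] at h0
      have hb : ∑ x : ZMod p, w (b, y₀ + x * (b.1 - b.1)) = w (b, y₀) := by
        simp [Finset.sum_const, ZMod.card, hcard]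
      have hrest : ∀ a ∈ Finset.univ.erase b,
          ∑ x : ZMod p, w (a, y₀ + x * (b.1 - a.1)) = ∑ y : ZMod p, w (a, y) := by
        intro a ha
        have hne : b.1 - a.1 ≠ 0 := by
          rw [sub_ne_zero]
          intro h
          exact (Finset.mem_erase.mp ha).1 (Subtype.ext h.symm)
        exact Fintype.sum_equiv ((Equiv.mulRight₀ _ hne).trans (Equiv.addLeft y₀)) _ _
          (fun x => rfl)
      rw [hb, Finset.sum_congr rfl hrest] at h0
      -- h0 : w (b, y₀) + S = 0 in char 2
      have h1 := eq_neg_of_add_eq_zero_left h0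
      rwa [CharTwo.neg_eq] at h1
    constructor
    · intro a y
      rw [main a y, main a 0]
    · have := key 0 0
      simpa using this
  · rintro ⟨hconst, hsum⟩
    apply LinearMap.mem_ker.mpr
    funext c
    obtain ⟨x, z⟩ := c
    rw [stack_transpose_apply]
    calc ∑ a : {a // a ∈ A}, w (a, z - x * a.1)
        = ∑ a : {a // a ∈ A}, w (a, 0) := Finset.sum_congr rfl fun a _ => hconst a _
      _ = 0 := hsum

end Aux

/-- The binary code with parity-check matrix the stacking of the layers `L_a`,
`a ∈ A` (a set of `j` distinct nonzero residues), is a linear code of length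
`p²` and dimension `p² - j(p-1) - 1`. -/
theorem stmt_8 (p : ℕ) [Fact p.Prime] (hodd : p ≠ 2)
    (A : Finset (ZMod p)) (hA : A.Nonempty) (hA0 : (0 : ZMod p) ∉ A) :
    Module.finrank (ZMod 2) (LinearMap.ker (stack p A).mulVecLin) =
      p ^ 2 - A.card * (p - 1) - 1 := by
  classical
  have hp : p.Prime := Fact.out
  set j := A.card with hj
  -- the sum functional on functions {a // a ∈ A} → ZMod 2
  let σ : ({a // a ∈ A} → ZMod 2) →ₗ[ZMod 2] ZMod 2 :=
    { toFun := fun f => ∑ a, f a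
      map_add' := by intros; simp [Finset.sum_add_distrib]
      map_smul' := by intros; simp [Finset.mul_sum] }
  -- the evaluation-at-0 map from ker of transpose to ker σ
  let Φ : ({a // a ∈ A} × ZMod p → ZMod 2) →ₗ[ZMod 2] ({a // a ∈ A} → ZMod 2) :=
    { toFun := fun w a => w (a, 0)
      map_add' := by intros; rfl
      map_smul' := by intros; rfl }
  have hΦ : ∀ w ∈ LinearMap.ker (stack p A)ᵀ.mulVecLin, Φ w ∈ LinearMap.ker σ := by
    intro w hw
    exact ((mem_ker_transpose_iff p A hodd w).mp hw).2
  let Φ' : LinearMap.ker (stack p A)ᵀ.mulVecLin →ₗ[ZMod 2] LinearMap.ker σ :=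
    (Φ.comp (LinearMap.ker (stack p A)ᵀ.mulVecLin).subtype).codRestrict _
      (fun w => hΦ w.1 w.2)
  have hbij : Function.Bijective Φ' := by
    constructor
    · rintro ⟨w, hw⟩ ⟨v, hv⟩ h
      have h' : ∀ a, w (a, 0) = v (a, 0) := fun a => congrFun (Subtype.ext_iff.mp h) a
      have hwc := ((mem_ker_transpose_iff p A hodd w).mp hw).1
      have hvc := ((mem_ker_transpose_iff p A hodd v).mp hv).1
      apply Subtype.ext
      funext c
      obtain ⟨a, y⟩ := c
      show w (a, y) = v (a, y)
      rw [hwc a y, hvc a y, h' a]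
    · rintro ⟨f, hf⟩
      refine ⟨⟨fun c => f c.1, ?_⟩, rfl⟩
      exact (mem_ker_transpose_iff p A hodd _).mpr ⟨fun a y => rfl, hf⟩
  have hkerT : Module.finrank (ZMod 2) (LinearMap.ker (stack p A)ᵀ.mulVecLin)
      = Module.finrank (ZMod 2) (LinearMap.ker σ) :=
    (LinearEquiv.ofBijective Φ' hbij).finrank_eq
  -- σ is surjective since A is nonempty
  have hσsurj : LinearMap.range σ = ⊤ := by
    rw [LinearMap.range_eq_top]
    intro c
    obtain ⟨a, ha⟩ := hA
    refine ⟨fun b => if b = ⟨a, ha⟩ then c else 0, ?_⟩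
    simp [σ]
  have hcardsub : Fintype.card {a // a ∈ A} = j := Fintype.card_coe A
  have hkerσ : Module.finrank (ZMod 2) (LinearMap.ker σ) = j - 1 := by
    have h1 := LinearMap.finrank_range_add_finrank_ker σ
    rw [hσsurj] at h1
    simp only [finrank_top, Module.finrank_self, Module.finrank_fintype_fun_eq_card,
      hcardsub] at h1
    omega
  -- rank-nullity for the transpose
  have hT := LinearMap.finrank_range_add_finrank_ker ((stack p A)ᵀ.mulVecLin)
  rw [hkerT, hkerσ] at hT
  rw [Module.finrank_fintype_fun_eq_card] at hT
  rw [Fintype.card_prod, hcardsub, ZMod.card] at hT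
  -- rank of stack = rank of transpose
  have hrk : ((stack p A)ᵀ).rank = (stack p A).rank := Matrix.rank_transpose _
  have hT' : (stack p A).rank + (j - 1) = j * p := by
    rw [← hrk]; exact hT
  -- rank-nullity for the stack itself
  have hS := LinearMap.finrank_range_add_finrank_ker ((stack p A).mulVecLin)
  rw [Module.finrank_fintype_fun_eq_card, Fintype.card_prod, ZMod.card] at hS
  have hrankdef : Module.finrank (ZMod 2) (LinearMap.range (stack p A).mulVecLin)
      = (stack p A).rank := rfl
  rw [hrankdef] at hS
  -- arithmetic
  have hj1 : 1 ≤ j := Finset.card_pos.mpr hA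
  have hjp : j ≤ p := by
    calc j ≤ Fintype.card (ZMod p) := by rw [← hcardsub]; exact Fintype.card_le_of_injective _ Subtype.val_injective
    _ = p := ZMod.card p
  have hp1 : j * p = j * (p - 1) + j := by
    have : p - 1 + 1 = p := Nat.succ_pred_eq_of_pos hp.pos
    calc j * p = j * (p - 1 + 1) := by rw [this]
    _ = j * (p - 1) + j := by ring
  have hmul : j * p ≤ p * p := Nat.mul_le_mul_right p hjp
  rw [pow_two]
  omega
end

section
/- Let p ≥ 5 be an odd prime, A, B, R, H_1', H_2' as above with B \ R nonempty. Then rank(H_1' (H_2')^T) = 1 over F_2. -/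
open Matrix

lemma rank_all_ones (m n : Type) [Fintype m] [Fintype n] [DecidableEq m] [DecidableEq n]
    [Nonempty m] [Nonempty n] :
    (Matrix.of (fun (_:m) (_:n) => (1:ZMod 2))).rank = 1 := by
  apply le_antisymm
  · have : (Matrix.of (fun (_:m) (_:n) => (1:ZMod 2))) =
      (Matrix.of (fun (_:m) (_:Unit) => (1:ZMod 2))) * (Matrix.of (fun (_:Unit) (_:n) => (1:ZMod 2))) := by
      ext i j; simp [Matrix.mul_apply]
    rw [this]
    have h := Matrix.rank_mul_le_right (Matrix.of (fun (_:m) (_:Unit) => (1:ZMod 2))) (Matrix.of (fun (_:Unit) (_:n) => (1:ZMod 2)))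
    calc _ ≤ _ := h
      _ ≤ Fintype.card Unit := Matrix.rank_le_card_height _
      _ = 1 := rfl
  · rw [Nat.one_le_iff_ne_zero]
    intro h0
    rw [Matrix.rank, Submodule.finrank_eq_zero, LinearMap.range_eq_bot] at h0
    have := congrFun (LinearMap.congr_fun h0 (Pi.single (Classical.arbitrary n) 1)) (Classical.arbitrary m)
    simp [Matrix.mulVecLin, Matrix.mulVec, dotProduct] at this

/-- With `A = {1, …, (p-1)/2}`, `B = {(p+1)/2, …, p-1}`, `R ⊆ B`, and `B \ R`
nonempty, the modified matrices `H₁' = stack (A ∪ R)`, `H₂' = stack (B \ R)`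
satisfy `rank (H₁' H₂'ᵀ) = 1` over `F₂`. -/
theorem stmt_11 (p : ℕ) [Fact p.Prime] (hp5 : 5 ≤ p) (hodd : p ≠ 2)
    (A B : Finset (ZMod p))
    (hA : A = (Finset.Icc 1 ((p - 1) / 2)).image (Nat.cast : ℕ → ZMod p))
    (hB : B = (Finset.Icc ((p + 1) / 2) (p - 1)).image (Nat.cast : ℕ → ZMod p))
    (R : Finset (ZMod p)) (hR : R ⊆ B) (hBR : (B \ R).Nonempty) :
    (stack p (A ∪ R) * (stack p (B \ R))ᵀ).rank = 1 := by
  have hp : p.Prime := Fact.out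
  have hp2 : p % 2 = 1 := Nat.odd_iff.mp (hp.odd_of_ne_two hodd)
  -- A and B are disjoint
  have hAB : Disjoint A B := by
    rw [hA, hB, Finset.disjoint_left]
    rintro x hx hx'
    simp only [Finset.mem_image, Finset.mem_Icc] at hx hx'
    obtain ⟨n, ⟨hn1, hn2⟩, rfl⟩ := hx
    obtain ⟨m, ⟨hm1, hm2⟩, hm⟩ := hx'
    have h1 := ZMod.val_cast_of_lt (show n < p by omega)
    have h2 := ZMod.val_cast_of_lt (show m < p by omega)
    have := congrArg ZMod.val hm
    rw [h1, h2] at this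
    omega
  -- the product is the all-ones matrix
  have key : stack p (A ∪ R) * (stack p (B \ R))ᵀ =
      Matrix.of (fun _ _ => (1 : ZMod 2)) := by
    ext ⟨a, y⟩ ⟨b, z⟩
    have hab : (a : ZMod p) ≠ (b : ZMod p) := by
      intro h
      have hb := b.2
      rw [Finset.mem_sdiff] at hb
      rcases Finset.mem_union.mp a.2 with ha | ha
      · exact Finset.disjoint_left.mp hAB (h ▸ ha) hb.1
      · exact hb.2 (h ▸ ha)
    have hd : (a : ZMod p) - (b : ZMod p) ≠ 0 := sub_ne_zero.mpr hab
    rw [Matrix.mul_apply]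
    simp only [stack, layer, cpm, Matrix.transpose_apply, Matrix.of_apply]
    rw [Fintype.sum_prod_type]
    have inner : ∀ c1 : ZMod p,
        (∑ c2 : ZMod p, (if c2 = c1 * a + y then (1:ZMod 2) else 0) *
          (if c2 = c1 * b + z then 1 else 0)) =
        if c1 = (z - y) / ((a : ZMod p) - b) then 1 else 0 := by
      intro c1
      have step : ∀ c2 : ZMod p,
          (if c2 = c1 * a + y then (1:ZMod 2) else 0) * (if c2 = c1 * b + z then 1 else 0) =
          if c2 = c1 * a + y then (if c1 * (a:ZMod p) + y = c1 * b + z then (1:ZMod 2) else 0) else 0 := by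
        intro c2
        by_cases h1 : c2 = c1 * a + y <;> by_cases h2 : c2 = c1 * b + z <;>
          simp_all
      simp_rw [step]
      rw [Finset.sum_ite_eq' Finset.univ (c1 * (a:ZMod p) + y)]
      simp only [Finset.mem_univ, if_true]
      congr 1
      rw [eq_div_iff hd]
      exact propext ⟨fun h => by linear_combination h, fun h => by linear_combination h⟩
    simp_rw [inner]
    rw [Finset.sum_ite_eq' Finset.univ ((z - y) / ((a:ZMod p) - b)) (fun _ => (1:ZMod 2))]
    simp
  rw [key]
  haveI : NeZero p := ⟨hp.ne_zero⟩
  haveI : Nonempty {x // x ∈ A ∪ R} := by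
    refine ⟨⟨(1 : ZMod p), ?_⟩⟩
    apply Finset.mem_union_left
    rw [hA]
    refine Finset.mem_image.mpr ⟨1, Finset.mem_Icc.mpr ⟨le_refl _, by omega⟩, by simp⟩
  haveI : Nonempty {x // x ∈ B \ R} := ⟨⟨hBR.choose, hBR.choose_spec⟩⟩
  exact rank_all_ones _ _
end

section
/- For an odd prime p ≥ 5 and integer i with 0 ≤ i ≤ (p-5)/2, the CSS construction applied to H_1 stacking layers L_1, ..., L_{(p-1)/2 - i} and H_2 stacking layers L_{(p+1)/2}, ..., L_{p-1-i} yields parameters of an [[p^2, 2(i+1)(p-1); 1]] entanglement-assisted code: length p^2, c = rank(H_1 H_2^T) = 1 ebit, and number of logical qubits p^2 - rank(H_1) - rank(H_2) + 1 = 2(i+1)(p-1). -/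
open Matrix

section Aux

variable {p : ℕ} [Fact p.Prime]

lemma aux_pcast2 (hp2 : p ≠ 2) : (p : ZMod 2) = 1 := by
  have h : p % 2 = 1 := Nat.odd_iff.mp ((Fact.out : p.Prime).odd_of_ne_two hp2)
  rw [← ZMod.natCast_mod p 2, h, Nat.cast_one]

lemma aux_stackT_mulVec (A : Finset (ZMod p)) (ε : {a // a ∈ A} × ZMod p → ZMod 2)
    (x z : ZMod p) :
    (stack p A)ᵀ.mulVec ε (x, z) = ∑ a : {a // a ∈ A}, ε (a, z - x * a.1) := by
  simp only [Matrix.mulVec, dotProduct, Matrix.transpose_apply, stack, layer, cpm]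
  rw [Fintype.sum_prod_type]
  refine Finset.sum_congr rfl fun a _ => ?_
  have : ∀ y : ZMod p, (if z = x * a.1 + y then (1 : ZMod 2) else 0) * ε (a, y)
      = if y = z - x * a.1 then ε (a, y) else 0 := by
    intro y
    by_cases h : y = z - x * a.1
    · have hz : z = x * a.1 + y := by rw [h]; ring
      rw [if_pos hz, if_pos h, one_mul]
    · have hz : ¬ (z = x * a.1 + y) := fun hc => h (by rw [hc]; ring)
      rw [if_neg hz, if_neg h, zero_mul]
  simp_rw [this]
  rw [Finset.sum_ite_eq' Finset.univ (z - x * a.1) (fun y => ε (a, y))]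
  simp

lemma aux_const (hp2 : p ≠ 2) (A : Finset (ZMod p))
    (ε : {a // a ∈ A} × ZMod p → ZMod 2)
    (h0 : ∀ x z : ZMod p, ∑ a : {a // a ∈ A}, ε (a, z - x * a.1) = 0)
    (b : {a // a ∈ A}) (z : ZMod p) :
    ε (b, z) = ∑ a ∈ Finset.univ.erase b, ∑ y : ZMod p, ε (a, y) := by
  haveI : NeZero p := ⟨(Fact.out : p.Prime).ne_zero⟩
  have h1 : ∑ x : ZMod p, ∑ a : {a // a ∈ A}, ε (a, (z + x * b.1) - x * a.1) = 0 :=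
    Finset.sum_eq_zero fun x _ => h0 x (z + x * b.1)
  rw [Finset.sum_comm] at h1
  rw [← Finset.sum_erase_add _ _ (Finset.mem_univ b)] at h1
  have hb : ∑ x : ZMod p, ε (b, (z + x * b.1) - x * b.1) = ε (b, z) := by
    have harg : ∀ x : ZMod p, (z + x * b.1) - x * b.1 = z := fun x => by ring
    simp_rw [harg]
    rw [Finset.sum_const, Finset.card_univ, ZMod.card, nsmul_eq_mul, aux_pcast2 hp2, one_mul]
  have herase : ∀ a ∈ Finset.univ.erase b,
      ∑ x : ZMod p, ε (a, (z + x * b.1) - x * a.1) = ∑ y : ZMod p, ε (a, y) := by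
    intro a ha
    have hne : a ≠ b := (Finset.mem_erase.mp ha).1
    have hba : b.1 - a.1 ≠ 0 := sub_ne_zero.mpr fun h => hne (Subtype.ext h.symm)
    have harg : ∀ x : ZMod p, (z + x * b.1) - x * a.1 = z + x * (b.1 - a.1) := fun x => by ring
    simp_rw [harg]
    exact Equiv.sum_comp ((Equiv.mulRight₀ (b.1 - a.1) hba).trans (Equiv.addLeft z))
      (fun y => ε (a, y))
  rw [Finset.sum_congr rfl herase, hb] at h1
  have := eq_neg_of_add_eq_zero_right h1
  rw [CharTwo.neg_eq] at this
  exact this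

/-- The left kernel of a stack equals constant-per-layer vectors with zero sum. -/
lemma aux_ker_eq (hp2 : p ≠ 2) (A : Finset (ZMod p)) :
    LinearMap.ker ((stack p A)ᵀ.mulVecLin) =
      Submodule.map (LinearMap.funLeft (ZMod 2) (ZMod 2)
          (Prod.fst : {a // a ∈ A} × ZMod p → {a // a ∈ A}))
        (LinearMap.ker (∑ a : {a // a ∈ A}, LinearMap.proj a :
          ({a // a ∈ A} → ZMod 2) →ₗ[ZMod 2] ZMod 2)) := by
  ext ε
  simp only [LinearMap.mem_ker, Matrix.mulVecLin_apply, Submodule.mem_map]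
  constructor
  · intro hε
    have h0 : ∀ x z : ZMod p, ∑ a : {a // a ∈ A}, ε (a, z - x * a.1) = 0 := by
      intro x z
      rw [← aux_stackT_mulVec A ε x z, hε]
      rfl
    refine ⟨fun a => ε (a, 0), ?_, ?_⟩
    · show ((∑ a : {a // a ∈ A}, LinearMap.proj a :
          ({a // a ∈ A} → ZMod 2) →ₗ[ZMod 2] ZMod 2) fun a => ε (a, 0)) = 0
      simp only [LinearMap.sum_apply, LinearMap.proj_apply]
      simpa using h0 0 0
    · funext j
      obtain ⟨a, y⟩ := j
      have h1 := aux_const hp2 A ε h0 a y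
      have h2 := aux_const hp2 A ε h0 a 0
      simp only [LinearMap.funLeft_apply, Function.comp]
      rw [h1, ← h2]
  · rintro ⟨c, hc, rfl⟩
    simp only [LinearMap.mem_ker, LinearMap.sum_apply, LinearMap.proj_apply] at hc
    funext xz
    obtain ⟨x, z⟩ := xz
    rw [aux_stackT_mulVec]
    simpa using hc

lemma aux_rank_stack (hp2 : p ≠ 2) (A : Finset (ZMod p)) (hA : A.Nonempty) :
    (stack p A).rank + A.card = A.card * p + 1 := by
  haveI : NeZero p := ⟨(Fact.out : p.Prime).ne_zero⟩
  haveI : Nonempty {a // a ∈ A} := Finset.nonempty_coe_sort.mpr hA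
  set σ : ({a // a ∈ A} → ZMod 2) →ₗ[ZMod 2] ZMod 2 :=
    ∑ a : {a // a ∈ A}, LinearMap.proj a with hσ
  have hσsurj : LinearMap.range σ = ⊤ := by
    rw [LinearMap.range_eq_top]
    intro v
    obtain ⟨a0⟩ := (inferInstance : Nonempty {a // a ∈ A})
    refine ⟨Pi.single a0 v, ?_⟩
    simp [hσ, LinearMap.sum_apply, LinearMap.proj_apply, Pi.single_apply,
      Finset.sum_ite_eq' Finset.univ a0 (fun _ => v)]
  have hker1 : Module.finrank (ZMod 2) (LinearMap.ker σ) + 1 = A.card := by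
    have h := LinearMap.finrank_range_add_finrank_ker σ
    rw [hσsurj, finrank_top, Module.finrank_self,
      Module.finrank_fintype_fun_eq_card, Fintype.card_coe] at h
    omega
  have hinj : Function.Injective (LinearMap.funLeft (ZMod 2) (ZMod 2)
      (Prod.fst : {a // a ∈ A} × ZMod p → {a // a ∈ A})) :=
    LinearMap.funLeft_injective_of_surjective _ _ _ Prod.fst_surjective
  have hker2 : Module.finrank (ZMod 2) (LinearMap.ker ((stack p A)ᵀ.mulVecLin)) =
      Module.finrank (ZMod 2) (LinearMap.ker σ) := by
    rw [aux_ker_eq hp2 A]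
    exact (Submodule.equivMapOfInjective _ hinj _).finrank_eq.symm
  have hrank := LinearMap.finrank_range_add_finrank_ker ((stack p A)ᵀ.mulVecLin)
  rw [Module.finrank_fintype_fun_eq_card, Fintype.card_prod, Fintype.card_coe,
    ZMod.card, hker2] at hrank
  have hdef : (stack p A)ᵀ.rank =
      Module.finrank (ZMod 2) (LinearMap.range ((stack p A)ᵀ.mulVecLin)) := rfl
  have htr : (stack p A)ᵀ.rank = (stack p A).rank := Matrix.rank_transpose _
  omega

lemma aux_stack_mul_transpose (A B : Finset (ZMod p))
    (hAB : ∀ a ∈ A, ∀ b ∈ B, a ≠ b) :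
    stack p A * (stack p B)ᵀ = Matrix.of fun _ _ => (1 : ZMod 2) := by
  ext ⟨⟨a, ha⟩, y⟩ ⟨⟨b, hb⟩, z⟩
  have hab : a - b ≠ 0 := sub_ne_zero.mpr (hAB a ha b hb)
  simp only [Matrix.mul_apply, Matrix.transpose_apply, stack, layer, cpm, Matrix.of_apply]
  rw [Fintype.sum_prod_type]
  have hinner : ∀ x : ZMod p,
      (∑ w : ZMod p, (if w = x * a + y then (1 : ZMod 2) else 0) *
        (if w = x * b + z then 1 else 0)) =
      if x = (z - y) * (a - b)⁻¹ then 1 else 0 := by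
    intro x
    simp_rw [ite_mul, one_mul, zero_mul]
    rw [Finset.sum_ite_eq' Finset.univ (x * a + y)
      (fun w => if w = x * b + z then (1 : ZMod 2) else 0)]
    simp only [Finset.mem_univ, if_true]
    have hcond : (x * a + y = x * b + z) ↔ (x = (z - y) * (a - b)⁻¹) := by
      rw [eq_mul_inv_iff_mul_eq₀ hab]
      constructor
      · intro h; linear_combination h
      · intro h; linear_combination h
    rw [if_congr hcond rfl rfl]
  simp_rw [hinner]
  rw [Finset.sum_ite_eq' Finset.univ ((z - y) * (a - b)⁻¹) (fun _ => (1 : ZMod 2))]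
  simp

lemma aux_rank_allOnes {m n : Type*} [Fintype m] [Fintype n] [DecidableEq n]
    [Nonempty m] [Nonempty n] :
    (Matrix.of fun (_ : m) (_ : n) => (1 : ZMod 2)).rank = 1 := by
  have hones : (fun _ : m => (1 : ZMod 2)) ≠ 0 := by
    intro h
    have := congrFun h (Classical.arbitrary m)
    simp at this
  have hrange : LinearMap.range (Matrix.of fun (_ : m) (_ : n) => (1 : ZMod 2)).mulVecLin =
      Submodule.span (ZMod 2) {fun _ : m => (1 : ZMod 2)} := by
    apply le_antisymm
    · rintro v ⟨w, rfl⟩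
      have : (Matrix.of fun (_ : m) (_ : n) => (1 : ZMod 2)).mulVecLin w =
          (∑ j, w j) • (fun _ : m => (1 : ZMod 2)) := by
        funext i
        simp [Matrix.mulVecLin_apply, Matrix.mulVec, dotProduct, smul_eq_mul]
      rw [this]
      exact Submodule.smul_mem _ _ (Submodule.mem_span_singleton_self _)
    · rw [Submodule.span_le, Set.singleton_subset_iff]
      obtain ⟨j0⟩ := (inferInstance : Nonempty n)
      refine ⟨Pi.single j0 1, ?_⟩
      funext i
      simp [Matrix.mulVecLin_apply, Matrix.mulVec, dotProduct, Pi.single_apply,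
        Finset.sum_ite_eq' Finset.univ j0 (fun _ => (1 : ZMod 2))]
  rw [Matrix.rank, hrange, finrank_span_singleton hones]

end Aux

/-- For an odd prime `p ≥ 5` and `0 ≤ i ≤ (p-5)/2`, the CSS construction
applied to `H₁` stacking layers `L_1, …, L_{(p-1)/2 - i}` and `H₂` stacking
layers `L_{(p+1)/2}, …, L_{p-1-i}` yields an `[[p², 2(i+1)(p-1); 1]]`
entanglement-assisted code: `rank (H₁ H₂ᵀ) = 1` ebit and
`p² - rank H₁ - rank H₂ + 1 = 2(i+1)(p-1)` logical qubits. -/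
theorem stmt_15 (p : ℕ) [Fact p.Prime] (hp5 : 5 ≤ p) (hodd : p ≠ 2)
    (i : ℕ) (hi : i ≤ (p - 5) / 2)
    (A B : Finset (ZMod p))
    (hA : A = (Finset.Icc 1 ((p - 1) / 2 - i)).image (Nat.cast : ℕ → ZMod p))
    (hB : B = (Finset.Icc ((p + 1) / 2) (p - 1 - i)).image (Nat.cast : ℕ → ZMod p)) :
    (stack p A * (stack p B)ᵀ).rank = 1 ∧
      ((p : ℤ) ^ 2 - (stack p A).rank - (stack p B).rank + 1 =
        2 * (i + 1) * ((p : ℤ) - 1)) := by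
  haveI : NeZero p := ⟨(Fact.out : p.Prime).ne_zero⟩
  obtain ⟨m, hm⟩ := (Fact.out : p.Prime).odd_of_ne_two hodd
  have hm2 : 2 ≤ m := by omega
  have him : i ≤ m - 2 := by omega
  have hA1 : (p - 1) / 2 - i = m - i := by omega
  have hB1 : (p + 1) / 2 = m + 1 := by omega
  have hB2 : p - 1 - i = 2 * m - i := by omega
  rw [hA1] at hA
  rw [hB1, hB2] at hB
  -- injectivity of cast on small naturals
  have hcast : ∀ x y : ℕ, x < p → y < p → (x : ZMod p) = y → x = y := by
    intro x y hx hy h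
    rw [← ZMod.val_cast_of_lt hx, ← ZMod.val_cast_of_lt hy, h]
  have hcardA : A.card = m - i := by
    rw [hA, Finset.card_image_of_injOn, Nat.card_Icc]
    · omega
    · intro x hx y hy h
      rw [Finset.coe_Icc, Set.mem_Icc] at hx hy
      exact hcast x y (by omega) (by omega) h
  have hcardB : B.card = m - i := by
    rw [hB, Finset.card_image_of_injOn, Nat.card_Icc]
    · omega
    · intro x hx y hy h
      rw [Finset.coe_Icc, Set.mem_Icc] at hx hy
      exact hcast x y (by omega) (by omega) h
  have hAne : A.Nonempty := by
    rw [hA]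
    exact ⟨(1 : ℕ), Finset.mem_image_of_mem _ (Finset.mem_Icc.mpr ⟨le_refl 1, by omega⟩)⟩
  have hBne : B.Nonempty := by
    rw [hB]
    exact ⟨((m + 1 : ℕ) : ZMod p),
      Finset.mem_image_of_mem _ (Finset.mem_Icc.mpr ⟨le_refl _, by omega⟩)⟩
  have hAB : ∀ a ∈ A, ∀ b ∈ B, a ≠ b := by
    rw [hA, hB]
    intro a ha b hb
    simp only [Finset.mem_image, Finset.mem_Icc] at ha hb
    obtain ⟨x, ⟨hx1, hx2⟩, rfl⟩ := ha
    obtain ⟨y, ⟨hy1, hy2⟩, rfl⟩ := hb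
    intro h
    have := hcast x y (by omega) (by omega) h
    omega
  constructor
  · rw [aux_stack_mul_transpose A B hAB]
    haveI : Nonempty {a // a ∈ A} := Finset.nonempty_coe_sort.mpr hAne
    haveI : Nonempty {b // b ∈ B} := Finset.nonempty_coe_sort.mpr hBne
    exact aux_rank_allOnes
  · have h1 := aux_rank_stack hodd A hAne
    have h2 := aux_rank_stack hodd B hBne
    rw [hcardA] at h1
    rw [hcardB] at h2
    have h1' : ((stack p A).rank : ℤ) + (m - i : ℕ) = (m - i : ℕ) * p + 1 := by
      exact_mod_cast congrArg (Nat.cast : ℕ → ℤ) h1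
    have h2' : ((stack p B).rank : ℤ) + (m - i : ℕ) = (m - i : ℕ) * p + 1 := by
      exact_mod_cast congrArg (Nat.cast : ℕ → ℤ) h2
    have hmi : ((m - i : ℕ) : ℤ) = (m : ℤ) - i := by
      rw [Nat.cast_sub (by omega)]
    have hp' : (p : ℤ) = 2 * m + 1 := by exact_mod_cast congrArg (Nat.cast : ℕ → ℤ) hm
    rw [hmi] at h1' h2'
    rw [hp'] at h1' h2' ⊢
    linear_combination - h1' - h2'
end
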